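/- (Tate's identity.) Let F be a field and let a, b, t ∈ F with a ≠ b, t ≠ a, t ≠ b. Then in (⋀² F*) ⊗ ℚ one has (t−a) ∧ (t−b) = ((t−a)/(b−a)) ∧ (1 − (t−a)/(b−a)) + (t−a) ∧ (a−b) − (t−b) ∧ (b−a), i.e., this identity holds in the second exterior power of the multiplicative group F* up to torsion. -/

import Mathlib

open scoped TensorProduct

variable {F : Type*} [Field F]

/-- The wedge `a ∧ b` of two units of a field `F`, viewed inside the exterior algebra over `ℤ`
of the multiplicative group `F*` (written additively); the degree-two part of this
exterior algebra is `⋀² F*`. -/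
noncomputable def wedgeUnits (a b : Fˣ) : ExteriorAlgebra ℤ (Additive Fˣ) :=
  ExteriorAlgebra.ι ℤ (Additive.ofMul a) * ExteriorAlgebra.ι ℤ (Additive.ofMul b)

namespace TateAux

/-- The wedge inside the rationalized exterior algebra. -/
noncomputable def wq (a b : Fˣ) : ExteriorAlgebra ℤ (Additive Fˣ) ⊗[ℤ] ℚ :=
  wedgeUnits a b ⊗ₜ[ℤ] (1 : ℚ)

noncomputable def ιu (a : Fˣ) : ExteriorAlgebra ℤ (Additive Fˣ) :=
  ExteriorAlgebra.ι ℤ (Additive.ofMul a)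

lemma wedge_eq (a b : Fˣ) : wedgeUnits a b = ιu a * ιu b := rfl

lemma ιu_mul (a b : Fˣ) : ιu (a * b) = ιu a + ιu b := by
  unfold ιu
  rw [← map_add]
  rfl

lemma ιu_one : ιu (1 : Fˣ) = 0 := by
  unfold ιu
  have : Additive.ofMul (1 : Fˣ) = 0 := rfl
  rw [this, map_zero]

lemma wq_mul_left (a b c : Fˣ) : wq (a * b) c = wq a c + wq b c := by
  unfold wq
  rw [wedge_eq, wedge_eq, wedge_eq, ιu_mul, add_mul, TensorProduct.add_tmul]

lemma wq_mul_right (a b c : Fˣ) : wq a (b * c) = wq a b + wq a c := by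
  unfold wq
  rw [wedge_eq, wedge_eq, wedge_eq, ιu_mul, mul_add, TensorProduct.add_tmul]

lemma wq_one_left (c : Fˣ) : wq (1 : Fˣ) c = 0 := by
  unfold wq
  rw [wedge_eq, ιu_one, zero_mul, TensorProduct.zero_tmul]

lemma wq_one_right (c : Fˣ) : wq c (1 : Fˣ) = 0 := by
  unfold wq
  rw [wedge_eq, ιu_one, mul_zero, TensorProduct.zero_tmul]

lemma wq_self (a : Fˣ) : wq a a = 0 := by
  unfold wq
  rw [wedge_eq]
  unfold ιu
  rw [ExteriorAlgebra.ι_sq_zero, TensorProduct.zero_tmul]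

lemma wq_swap (a b : Fˣ) : wq a b = - wq b a := by
  unfold wq
  rw [wedge_eq, wedge_eq]
  have h := ExteriorAlgebra.ι_add_mul_swap (R := ℤ)
    (Additive.ofMul a) (Additive.ofMul b)
  have h2 : ιu a * ιu b = -(ιu b * ιu a) :=
    eq_neg_of_add_eq_zero_left h
  rw [h2, TensorProduct.neg_tmul]

lemma wq_inv_left (a c : Fˣ) : wq a⁻¹ c = - wq a c := by
  have h := wq_mul_left a⁻¹ a c
  rw [inv_mul_cancel, wq_one_left] at h
  exact eq_neg_of_add_eq_zero_left h.symm

lemma wq_inv_right (a c : Fˣ) : wq a c⁻¹ = - wq a c := by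
  have h := wq_mul_right a c⁻¹ c
  rw [inv_mul_cancel, wq_one_right] at h
  exact eq_neg_of_add_eq_zero_left h.symm

lemma two_smul_ofMul_neg_one :
    (2 : ℤ) • (Additive.ofMul (-1 : Fˣ)) = 0 := by
  have h : Additive.ofMul (-1 : Fˣ) + Additive.ofMul (-1 : Fˣ) = 0 := by
    have : ((-1 : Fˣ) * (-1 : Fˣ)) = 1 := by norm_num
    have h2 : Additive.ofMul ((-1 : Fˣ) * (-1 : Fˣ)) = Additive.ofMul (1 : Fˣ) := by
      rw [this]
    exact h2
  rw [two_zsmul, h]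

lemma wq_neg_one_left (c : Fˣ) : wq (-1 : Fˣ) c = 0 := by
  have h2 : (2 : ℤ) • wedgeUnits (-1 : Fˣ) c = 0 := by
    rw [wedge_eq]
    unfold ιu
    rw [← smul_mul_assoc, ← map_smul, two_smul_ofMul_neg_one, map_zero, zero_mul]
  have : wq (-1 : Fˣ) c
      = wedgeUnits (-1 : Fˣ) c ⊗ₜ[ℤ] ((2 : ℤ) • (2⁻¹ : ℚ)) := by
    unfold wq
    norm_num
  rw [this, TensorProduct.tmul_smul, TensorProduct.smul_tmul', h2,
    TensorProduct.zero_tmul]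

lemma wq_neg_one_right (c : Fˣ) : wq c (-1 : Fˣ) = 0 := by
  rw [wq_swap, wq_neg_one_left, neg_zero]

lemma key (X Y C : Fˣ) :
    wq X Y = wq (X * C⁻¹) ((-1) * (Y * C⁻¹)) + wq X ((-1) * C) - wq Y C := by
  simp only [wq_mul_left, wq_mul_right, wq_inv_left, wq_inv_right,
    wq_neg_one_left, wq_neg_one_right, wq_self, neg_neg, neg_zero,
    add_zero, zero_add]
  rw [wq_swap C Y]
  abel

end TateAux

/-- Tate's identity: for `a, b, t` in a field `F` with `a ≠ b`, `t ≠ a`, `t ≠ b`, one has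
`(t−a) ∧ (t−b) = ((t−a)/(b−a)) ∧ (1 − (t−a)/(b−a)) + (t−a) ∧ (a−b) − (t−b) ∧ (b−a)`
in `(⋀² F*) ⊗ ℚ` (i.e. up to torsion). -/
theorem tate_identity (a b t : F) (hab : a ≠ b) (hta : t ≠ a) (htb : t ≠ b) :
    (wedgeUnits (Units.mk0 (t - a) (sub_ne_zero_of_ne hta))
        (Units.mk0 (t - b) (sub_ne_zero_of_ne htb)) ⊗ₜ[ℤ] (1 : ℚ)
      : ExteriorAlgebra ℤ (Additive Fˣ) ⊗[ℤ] ℚ) =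
    (wedgeUnits
        (Units.mk0 ((t - a) / (b - a))
          (div_ne_zero (sub_ne_zero_of_ne hta) (sub_ne_zero_of_ne (Ne.symm hab))))
        (Units.mk0 (1 - (t - a) / (b - a)) (by
          have hba : b - a ≠ 0 := sub_ne_zero_of_ne (Ne.symm hab)
          have : 1 - (t - a) / (b - a) = (b - t) / (b - a) := by
            field_simp
            ring
          rw [this]
          exact div_ne_zero (sub_ne_zero_of_ne (Ne.symm htb)) hba)) +
      wedgeUnits (Units.mk0 (t - a) (sub_ne_zero_of_ne hta))
        (Units.mk0 (a - b) (sub_ne_zero_of_ne hab)) -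
      wedgeUnits (Units.mk0 (t - b) (sub_ne_zero_of_ne htb))
        (Units.mk0 (b - a) (sub_ne_zero_of_ne (Ne.symm hab)))) ⊗ₜ[ℤ] (1 : ℚ) := by
  classical
  set X : Fˣ := Units.mk0 (t - a) (sub_ne_zero_of_ne hta) with hX
  set Y : Fˣ := Units.mk0 (t - b) (sub_ne_zero_of_ne htb) with hY
  set C : Fˣ := Units.mk0 (b - a) (sub_ne_zero_of_ne (Ne.symm hab)) with hC
  have hba : b - a ≠ 0 := sub_ne_zero_of_ne (Ne.symm hab)
  have hu : Units.mk0 ((t - a) / (b - a))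
      (div_ne_zero (sub_ne_zero_of_ne hta) (sub_ne_zero_of_ne (Ne.symm hab)))
      = X * C⁻¹ := by
    ext
    simp [hX, hC, div_eq_mul_inv]
  have hv : Units.mk0 (1 - (t - a) / (b - a)) (by
          have hba : b - a ≠ 0 := sub_ne_zero_of_ne (Ne.symm hab)
          have : 1 - (t - a) / (b - a) = (b - t) / (b - a) := by
            field_simp
            ring
          rw [this]
          exact div_ne_zero (sub_ne_zero_of_ne (Ne.symm htb)) hba)
      = (-1 : Fˣ) * (Y * C⁻¹) := by
    ext
    simp only [hY, hC, Units.val_mul, Units.val_mk0, Units.val_inv_eq_inv_val,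
      Units.val_neg, Units.val_one]
    field_simp
    ring
  have hw : Units.mk0 (a - b) (sub_ne_zero_of_ne hab) = (-1 : Fˣ) * C := by
    ext
    simp [hC]
    try ring
  rw [hu, hv, hw, TensorProduct.sub_tmul, TensorProduct.add_tmul]
  exact TateAux.key X Y C
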